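/- The Jacobi triple product identity holds: ∑_{k∈ℤ} (-z)^k p^{k(k-1)/2} = θ(z;p) · ∏_{j=1}^∞ (1 - p^j) for all z ∈ ℂ\{0}. -/

import Mathlib

open Filter Finset Complex Topology

/-! Auxiliary definitions for the proof of the Jacobi triple product. -/

noncomputable def PhiR (p : ℝ) (n : ℕ) : ℝ := ∏ i ∈ Finset.range n, (1 - p ^ (i+1))
noncomputable def Phi (p : ℝ) (n : ℕ) : ℂ := ∏ i ∈ Finset.range n, (1 - (p:ℂ) ^ (i+1))
noncomputable def PhiInf (p : ℝ) : ℂ := ∏' i : ℕ, (1 - (p:ℂ) ^ (i+1))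
noncomputable def gb (p : ℝ) (n k : ℕ) : ℂ :=
  if k ≤ n then Phi p n / (Phi p k * Phi p (n - k)) else 0
noncomputable def A (p : ℝ) (z : ℂ) (m : ℤ) : ℂ := (-z)^m * (p:ℂ)^(m*(m-1)/2)
noncomputable def F (p : ℝ) (z : ℂ) (n : ℕ) (m : ℤ) : ℂ :=
  (if m.natAbs ≤ n then gb p (2*n) ((m + n).toNat) else 0) * A p z m

set_option linter.unusedSectionVars false
set_option linter.unusedVariables false

/-- If `f` is summable and all `1 + f n ≠ 0`, the product `∏ (1 + f n)` is
multipliable and nonzero. -/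
lemma mult_aux {f : ℕ → ℂ} (hs : Summable f) (h0 : ∀ n, 1 + f n ≠ 0) :
    Multipliable (fun n => 1 + f n) ∧ (∏' n, (1 + f n)) ≠ 0 := by
  have hlog : Summable (fun n => Complex.log (1 + f n)) := by
    have h2 : ∀ᶠ n in atTop, ‖f n‖ ≤ 1/2 := by
      have := hs.tendsto_atTop_zero
      have h := this.norm; rw [norm_zero] at h
      have := h.eventually_le_const (by norm_num : (0:ℝ) < 1/2)
      simpa using this
    refine Summable.of_norm_bounded_eventually_nat (g := fun n => (3/2) * ‖f n‖)
      (hs.norm.mul_left _) ?_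
    filter_upwards [h2] with n hn
    exact Complex.norm_log_one_add_half_le_self hn
  have key := Complex.cexp_tsum_eq_tprod (f := fun n => 1 + f n)
    (fun n => h0 n) hlog
  have key' := key
  constructor
  · exact Complex.multipliable_of_summable_log hlog
  · rw [← key']
    exact Complex.exp_ne_zero _

lemma even_half (x : ℤ) (h : Even x) : 2 * (x/2) = x := by obtain ⟨a, rfl⟩ := h; omega

lemma even_mul_pred (m : ℤ) : Even (m*(m-1)) := by
  have h := Int.even_mul_succ_self (m-1)
  rwa [show (m-1)*(m-1+1) = m*(m-1) by ring] at h

lemma cast_half (k : ℕ) : ((k*(k-1)/2 : ℕ) : ℤ) = (k:ℤ)*((k:ℤ)-1)/2 := by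
  rcases k with _|k
  · simp
  · obtain ⟨a, ha⟩ := Nat.even_mul_succ_self k
    have h1 : (k+1)*((k+1)-1) = 2*a := by rw [Nat.add_sub_cancel, Nat.mul_comm]; omega
    have h2 : ((k:ℤ)+1)*(((k:ℤ)+1)-1) = 2*(a:ℤ) := by
      have := congrArg (Nat.cast : ℕ → ℤ) h1
      push_cast at this
      linarith
    calc (((k+1)*((k+1)-1)/2 : ℕ) : ℤ) = (a : ℤ) := by rw [h1]; norm_num
      _ = ((k:ℤ)+1)*(((k:ℤ)+1)-1)/2 := by rw [h2]; omega
      _ = ((k+1:ℕ):ℤ)*(((k+1:ℕ):ℤ)-1)/2 := by push_cast; ring_nf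

lemma exp_identity (n k : ℕ) :
    ((k:ℤ)-n)*(((k:ℤ)-n)-1)/2 = ((k*(k-1)/2 + n*n : ℕ) : ℤ) - ((n*k + n*(n-1)/2 : ℕ) : ℤ) := by
  rw [Nat.cast_add, Nat.cast_add, cast_half, cast_half, Nat.cast_mul, Nat.cast_mul]
  set m : ℤ := (k:ℤ) - n with hm
  have e1 := even_half _ (even_mul_pred m)
  have e2 := even_half _ (even_mul_pred (k:ℤ))
  have e3 := even_half _ (even_mul_pred (n:ℤ))
  have hmm : m*(m-1) = (k:ℤ)*((k:ℤ)-1) + 2*((n:ℤ)*n) - 2*((n:ℤ)*k) - (n:ℤ)*((n:ℤ)-1) := by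
    rw [hm]; ring
  linarith [e1, e2, e3, hmm]

lemma nat_tri (k : ℕ) : (k+1)*k/2 = k*(k-1)/2 + k := by
  have h1 : (k+1)*k/2 = (k+1).choose 2 := by rw [Nat.choose_two_right]; simp
  have h2 : k*(k-1)/2 = k.choose 2 := (Nat.choose_two_right k).symm
  rw [h1, h2, show (2:ℕ) = 1 + 1 from rfl, Nat.choose_succ_succ k 1,
    Nat.choose_one_right, add_comm]


section
variable {p : ℝ} (hp0 : 0 < p) (hp1 : p < 1) {z : ℂ} (hz : z ≠ 0)
include hp0 hp1

lemma ppow_lt_one (i : ℕ) : p ^ (i+1) < 1 := pow_lt_one₀ hp0.le hp1 (Nat.succ_ne_zero i)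

lemma phi_cast (n : ℕ) : Phi p n = ((PhiR p n : ℝ) : ℂ) := by simp [Phi, PhiR]

lemma phi_factor_ne (i : ℕ) : (1 : ℂ) - (p:ℂ) ^ (i+1) ≠ 0 := by
  have : ((1 - p ^ (i+1) : ℝ) : ℂ) ≠ 0 := by
    simp only [ne_eq, Complex.ofReal_eq_zero]
    nlinarith [ppow_lt_one hp0 hp1 i]
  simpa using this

lemma phiR_pos (n : ℕ) : 0 < PhiR p n :=
  Finset.prod_pos fun i _ => by nlinarith [ppow_lt_one hp0 hp1 i, pow_pos hp0 (i+1)]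

lemma phiR_le_one (n : ℕ) : PhiR p n ≤ 1 :=
  Finset.prod_le_one (fun i _ => by nlinarith [ppow_lt_one hp0 hp1 i, pow_pos hp0 (i+1)])
    (fun i _ => by nlinarith [pow_pos hp0 (i+1)])

lemma phiR_anti : Antitone (PhiR p) := by
  apply antitone_nat_of_succ_le
  intro n
  have h1 := phiR_pos hp0 hp1 n
  have h2 := pow_pos hp0 (n+1)
  have := mul_le_of_le_one_right h1.le (by nlinarith : 1 - p^(n+1) ≤ 1)
  simpa [PhiR, Finset.prod_range_succ] using this

lemma summable_geom_c : Summable (fun n : ℕ => (p:ℂ) ^ (n+1)) := by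
  have hgeom : Summable (fun n : ℕ => (p:ℂ) ^ n) :=
    summable_geometric_of_norm_lt_one (by
      simpa using abs_lt.2 ⟨by linarith, hp1⟩)
  exact (hgeom.mul_right (p:ℂ)).congr (fun n => by rw [← pow_succ])

lemma phi_mult : Multipliable (fun i : ℕ => 1 - (p:ℂ) ^ (i+1)) ∧ PhiInf p ≠ 0 := by
  have := mult_aux (f := fun i : ℕ => -((p:ℂ) ^ (i+1)))
    (summable_geom_c hp0 hp1).neg
    (fun n => by simpa [sub_eq_add_neg] using phi_factor_ne hp0 hp1 n)
  simpa [PhiInf, sub_eq_add_neg] using this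

lemma phi_tendsto : Tendsto (Phi p) atTop (𝓝 (PhiInf p)) :=
  (phi_mult hp0 hp1).1.hasProd.tendsto_prod_nat

lemma phiR_limit : ∃ L : ℝ, 0 < L ∧ (∀ n, L ≤ PhiR p n) ∧ PhiInf p = ((L:ℝ):ℂ) := by
  have h := phi_tendsto hp0 hp1
  have h2 : Tendsto (PhiR p) atTop (𝓝 (PhiInf p).re) := by
    have hc := (Complex.continuous_re).continuousAt (x := PhiInf p)
    have h2 := hc.tendsto.comp h
    have he : (fun z : ℂ => z.re) ∘ Phi p = PhiR p := by
      ext n; rw [Function.comp_apply, phi_cast hp0 hp1]; simp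
    rwa [he] at h2
  set L := (PhiInf p).re with hL
  have hcast : PhiInf p = ((L:ℝ):ℂ) := by
    refine tendsto_nhds_unique h ?_
    have : Tendsto (fun n => ((PhiR p n : ℝ) : ℂ)) atTop (𝓝 ((L:ℝ):ℂ)) :=
      (Complex.continuous_ofReal.continuousAt.tendsto).comp h2
    refine this.congr fun n => (phi_cast hp0 hp1 n).symm
  have hLle : ∀ n, L ≤ PhiR p n := fun n => phiR_anti hp0 hp1 |>.le_of_tendsto h2 n
  have hL0 : 0 ≤ L := ge_of_tendsto h2 (Eventually.of_forall fun n => (phiR_pos hp0 hp1 n).le)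
  have hLne : L ≠ 0 := by
    intro h0
    exact (phi_mult hp0 hp1).2 (by rw [hcast, h0]; simp)
  exact ⟨L, lt_of_le_of_ne hL0 (Ne.symm hLne), hLle, hcast⟩


lemma phi_ne (n : ℕ) : Phi p n ≠ 0 :=
  Finset.prod_ne_zero_iff.2 fun i _ => phi_factor_ne hp0 hp1 i

lemma phi_succ (n : ℕ) : Phi p (n+1) = Phi p n * (1 - (p:ℂ)^(n+1)) :=
  Finset.prod_range_succ _ n

lemma phi_zero : Phi p 0 = 1 := by simp [Phi]

lemma gb_zero (n : ℕ) : gb p n 0 = 1 := by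
  rw [gb, if_pos (Nat.zero_le n), phi_zero hp0 hp1, Nat.sub_zero, one_mul]
  exact div_self (phi_ne hp0 hp1 n)

lemma gb_self (n : ℕ) : gb p n n = 1 := by
  rw [gb, if_pos le_rfl, Nat.sub_self, phi_zero hp0 hp1, mul_one]
  exact div_self (phi_ne hp0 hp1 n)

lemma gb_of_gt {n k : ℕ} (h : n < k) : gb p n k = 0 := by simp [gb, Nat.not_le.2 h]

/-- Pascal recurrence for Gaussian binomials. -/
lemma gb_pascal (n k : ℕ) (hk : k ≤ n) :
    gb p (n+1) (k+1) = gb p n (k+1) + (p:ℂ)^(n-k) * gb p n k := by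
  rcases eq_or_lt_of_le hk with rfl | hlt
  · rw [gb_self hp0 hp1, gb_of_gt hp0 hp1 (Nat.lt_succ_self _), gb_self hp0 hp1]
    simp
  · -- k + 1 ≤ n
    have hk1 : k + 1 ≤ n := hlt
    have e1 : n + 1 - (k+1) = n - k := by omega
    have e2 : n - k = (n - (k+1)) + 1 := by omega
    rw [gb, gb, gb, if_pos (by omega), if_pos (by omega), if_pos (by omega)]
    rw [e1, phi_succ hp0 hp1 n, e2, phi_succ hp0 hp1 (n - (k+1)), phi_succ hp0 hp1 k]
    set a := Phi p n
    set b := Phi p k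
    set c := Phi p (n - (k+1))
    set u := (1:ℂ) - (p:ℂ)^(k+1)
    set v := (1:ℂ) - (p:ℂ)^(n - (k+1) + 1)
    set w := (1:ℂ) - (p:ℂ)^(n+1)
    set t := (p:ℂ)^(n - (k+1) + 1)
    have hw : w = v + t * u := by
      have hpw : t * (p:ℂ)^(k+1) = (p:ℂ)^(n+1) := by
        rw [← pow_add]; congr 1; omega
      simp only [w, v, u, t]
      rw [mul_sub, hpw]; ring
    have hb : b ≠ 0 := phi_ne hp0 hp1 k
    have hc : c ≠ 0 := phi_ne hp0 hp1 (n - (k+1))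
    have hu : u ≠ 0 := phi_factor_ne hp0 hp1 k
    have hv : v ≠ 0 := phi_factor_ne hp0 hp1 (n - (k+1))
    rw [hw]
    field_simp

/-- The Gauss q-binomial theorem. -/
lemma gauss_binomial (n : ℕ) (X : ℂ) :
    ∏ j ∈ Finset.range n, (1 + X * (p:ℂ)^j) =
      ∑ k ∈ Finset.range (n+1), (p:ℂ)^(k*(k-1)/2) * gb p n k * X^k := by
  induction n with
  | zero => simp [gb_zero hp0 hp1 0]
  | succ n ih =>
    set c : ℕ → ℕ → ℂ := fun n k => (p:ℂ)^(k*(k-1)/2) * gb p n k with hc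
    have hc0 : ∀ m, c m 0 = 1 := by intro m; simp [hc, gb_zero hp0 hp1 m]
    have hstep : ∀ k ≤ n, c (n+1) (k+1) = c n (k+1) + (p:ℂ)^n * c n k := by
      intro k hk
      simp only [hc]
      rw [gb_pascal hp0 hp1 n k hk, mul_add]
      congr 1
      have : (k+1)*(k+1-1)/2 = k*(k-1)/2 + k := by
        simp only [Nat.add_sub_cancel]; exact nat_tri k
      rw [this, ← mul_assoc, ← pow_add, ← mul_assoc, ← pow_add]
      have hgen : ∀ a : ℕ, a + k + (n - k) = n + a := fun a => by omega
      rw [hgen]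
    rw [Finset.prod_range_succ, ih, mul_add, mul_one]
    -- RHS target
    rw [Finset.sum_range_succ' (fun k => c (n+1) k * X^k) (n+1)]
    simp only [pow_zero, mul_one, hc0]
    -- expand LHS pieces
    have hL1 : ∑ k ∈ Finset.range (n+1), c n k * X^k
        = 1 + ∑ k ∈ Finset.range (n+1), c n (k+1) * X^(k+1) := by
      rw [Finset.sum_range_succ (fun k => c n (k+1) * X^(k+1)) n]
      rw [show c n (n+1) = 0 by simp [hc, gb_of_gt hp0 hp1 (Nat.lt_succ_self n)], zero_mul, add_zero]
      rw [Finset.sum_range_succ' (fun k => c n k * X^k) n]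
      rw [hc0, pow_zero, mul_one, add_comm]
    have hL2 : (∑ k ∈ Finset.range (n+1), c n k * X^k) * (X * (p:ℂ)^n)
        = ∑ k ∈ Finset.range (n+1), (p:ℂ)^n * c n k * X^(k+1) := by
      rw [Finset.sum_mul]
      congr 1; ext k; ring
    rw [hL2, hL1]
    have key : (∑ k ∈ Finset.range (n+1), c n (k+1) * X^(k+1))
        + ∑ k ∈ Finset.range (n+1), (p:ℂ)^n * c n k * X^(k+1)
        = ∑ k ∈ Finset.range (n+1), c (n+1) (k+1) * X^(k+1) := by
      rw [← Finset.sum_add_distrib]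
      apply Finset.sum_congr rfl
      intro k hk
      rw [hstep k (Nat.lt_succ_iff.mp (Finset.mem_range.mp hk))]
      ring
    linear_combination key

include hz in
lemma term_eq (n k : ℕ) :
    (-z)^((k:ℤ)-(n:ℤ)) * (p:ℂ)^(((k:ℤ)-(n:ℤ))*(((k:ℤ)-(n:ℤ))-1)/2)
      = (-z)^k * ((-z)^n)⁻¹ * ((p:ℂ)^(k*(k-1)/2 + n*n) * ((p:ℂ)^(n*k + n*(n-1)/2))⁻¹) := by
  have hq0 : (p:ℂ) ≠ 0 := by exact_mod_cast hp0.ne'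
  have hz' : (-z) ≠ 0 := neg_ne_zero.mpr hz
  rw [exp_identity n k, zpow_sub₀ hq0, show ((k:ℤ) - (n:ℤ)) = (k:ℤ) - (n:ℤ) from rfl,
    zpow_sub₀ hz']
  rw [zpow_natCast, zpow_natCast, zpow_natCast, zpow_natCast]
  rw [div_eq_mul_inv, div_eq_mul_inv]

include hz in
lemma finite_jtp (n : ℕ) :
    ∏ j ∈ Finset.range n, ((1 - z*(p:ℂ)^j) * (1 - (p:ℂ)^(j+1)/z)) =
      ∑ k ∈ Finset.range (2*n+1),
        gb p (2*n) k * ((-z)^((k:ℤ)-(n:ℤ)) * (p:ℂ)^((((k:ℤ)-(n:ℤ)))*((((k:ℤ)-(n:ℤ)))-1)/2)) := by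
  have hq0 : (p:ℂ) ≠ 0 := by exact_mod_cast hp0.ne'
  have hz' : (-z) ≠ 0 := neg_ne_zero.mpr hz
  have hqn : (p:ℂ)^n ≠ 0 := pow_ne_zero _ hq0
  set q : ℂ := (p:ℂ) with hqdef
  set X : ℂ := -z / q^n with hX
  -- upper half of the product
  have hup : ∏ j ∈ Finset.range n, (1 + X*q^(n+j)) = ∏ j ∈ Finset.range n, (1 - z*q^j) := by
    apply Finset.prod_congr rfl
    intro j _
    rw [hX, pow_add]
    field_simp
    ring
  -- lower half
  have hlow : ∏ j ∈ Finset.range n, (1 + X*q^j) =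
      (-z)^n * q^(n*(n-1)/2) * ((q^n)^n)⁻¹ * ∏ i ∈ Finset.range n, (1 - q^(i+1)/z) := by
    have hfac : ∀ j ∈ Finset.range n, 1 + X*q^j = (-z) * q^j * (q^n)⁻¹ * (1 - q^(n-j)/z) := by
      intro j hj
      have hj' : j < n := Finset.mem_range.mp hj
      have hqq : q^j * q^(n-j) = q^n := by rw [← pow_add]; congr 1; omega
      rw [hX]
      field_simp
      linear_combination (-1 : ℂ) * hqq
    rw [Finset.prod_congr rfl hfac, Finset.prod_mul_distrib, Finset.prod_mul_distrib,
      Finset.prod_mul_distrib, Finset.prod_const, Finset.card_range,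
      Finset.prod_const, Finset.card_range, inv_pow, Finset.prod_pow_eq_pow_sum]
    congr 1
    · congr 2
      rw [Finset.sum_range_id]
    · rw [← Finset.prod_range_reflect (fun i => 1 - q^(i+1)/z) n]
      apply Finset.prod_congr rfl
      intro j hj
      have : n - 1 - j + 1 = n - j := by have := Finset.mem_range.mp hj; omega
      simp only [this]
  -- combine
  have hsplit : ∏ j ∈ Finset.range (2*n), (1 + X*q^j)
      = (∏ j ∈ Finset.range n, (1 + X*q^j)) * ∏ j ∈ Finset.range n, (1 + X*q^(n+j)) := by
    rw [two_mul, Finset.prod_range_add]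
  have hgauss := gauss_binomial hp0 hp1 (2*n) X
  rw [hsplit, hup, hlow] at hgauss
  -- hgauss : C * (∏ lower-part) * (∏ upper-part) = ∑ ...
  have hC : (-z)^n * q^(n*(n-1)/2) * ((q^n)^n)⁻¹ ≠ 0 := by
    apply mul_ne_zero (mul_ne_zero (pow_ne_zero _ hz') (pow_ne_zero _ hq0))
    exact inv_ne_zero (pow_ne_zero _ hqn)
  have hmain : (-z)^n * q^(n*(n-1)/2) * ((q^n)^n)⁻¹ *
      (∏ j ∈ Finset.range n, ((1 - z*q^j) * (1 - q^(j+1)/z)))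
      = ∑ k ∈ Finset.range (2*n+1), (p:ℂ)^(k*(k-1)/2) * gb p (2*n) k * X^k := by
    rw [← hgauss, Finset.prod_mul_distrib]
    ring
  -- rewrite RHS termwise
  have hterm : ∀ k ∈ Finset.range (2*n+1),
      (p:ℂ)^(k*(k-1)/2) * gb p (2*n) k * X^k
      = ((-z)^n * q^(n*(n-1)/2) * ((q^n)^n)⁻¹) *
        (gb p (2*n) k * ((-z)^((k:ℤ)-(n:ℤ)) * (p:ℂ)^((((k:ℤ)-(n:ℤ)))*((((k:ℤ)-(n:ℤ)))-1)/2))) := by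
    intro k _
    rw [term_eq hp0 hp1 hz n k]
    rw [hX, div_pow, div_eq_mul_inv]
    rw [← hqdef, ← pow_mul, ← pow_mul]
    rw [pow_add]
    field_simp
    ring
  rw [Finset.sum_congr rfl hterm, ← Finset.mul_sum] at hmain
  exact mul_left_cancel₀ hC hmain

include hz in
lemma A_succ (m : ℤ) : A p z (m+1) = A p z m * ((-z) * (p:ℂ)^m) := by
  have hz' : (-z) ≠ 0 := neg_ne_zero.mpr hz
  have hp : (p:ℂ) ≠ 0 := by exact_mod_cast hp0.ne' 
  have he : (m+1)*(m+1-1)/2 = m*(m-1)/2 + m := by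
    have e1 := even_half _ (even_mul_pred (m+1))
    have e2 := even_half _ (even_mul_pred m)
    have e3 : (m+1)*(m+1-1) = m*(m-1) + 2*m := by ring
    omega
  rw [A, A, zpow_add₀ hz', zpow_one, he, zpow_add₀ hp]
  ring

include hz in
lemma summable_normA : Summable (fun m : ℤ => ‖A p z m‖) := by
  have hq0 : (p:ℂ) ≠ 0 := by exact_mod_cast hp0.ne'
  have hz' : (-z) ≠ 0 := neg_ne_zero.mpr hz
  have hznorm : 0 < ‖z‖ := norm_pos_iff.mpr hz
  have hqn : ∀ m : ℤ, ‖(p:ℂ)^m‖ = p^m := by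
    intro m
    rw [norm_zpow]
    norm_num
    rw [abs_of_pos hp0]
  have hAn : ∀ m : ℤ, ‖A p z (m+1)‖ = ‖A p z m‖ * (‖z‖ * p^m) := by
    intro m
    rw [A_succ hp0 hp1 hz m, norm_mul, norm_mul, hqn, norm_neg]
  apply Summable.of_nat_of_neg
  · apply summable_of_ratio_norm_eventually_le (r := 1/2) (by norm_num)
    have htend : Tendsto (fun n : ℕ => ‖z‖ * p^(n:ℤ)) atTop (𝓝 0) := by
      have : Tendsto (fun n : ℕ => p^(n:ℕ)) atTop (𝓝 0) :=
        tendsto_pow_atTop_nhds_zero_of_lt_one hp0.le hp1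
      have h2 := this.const_mul ‖z‖
      rw [mul_zero] at h2
      refine h2.congr fun n => ?_
      rw [zpow_natCast]
    filter_upwards [htend.eventually_le_const (by norm_num : (0:ℝ) < 1/2)] with n hn
    rw [norm_norm, norm_norm, show (((n+1):ℕ):ℤ) = (n:ℤ)+1 by push_cast; ring, hAn]
    have h0 : 0 ≤ ‖A p z (n:ℤ)‖ := norm_nonneg _
    calc ‖A p z (n:ℤ)‖ * (‖z‖ * p^(n:ℤ)) ≤ ‖A p z (n:ℤ)‖ * (1/2) :=
          mul_le_mul_of_nonneg_left hn h0
      _ = 1/2 * ‖A p z (n:ℤ)‖ := by ring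
  · apply summable_of_ratio_norm_eventually_le (r := 1/2) (by norm_num)
    have htend : Tendsto (fun n : ℕ => ‖z‖⁻¹ * p^((n:ℤ)+1)) atTop (𝓝 0) := by
      have : Tendsto (fun n : ℕ => p^(n:ℕ)) atTop (𝓝 0) :=
        tendsto_pow_atTop_nhds_zero_of_lt_one hp0.le hp1
      have h2 := this.const_mul (‖z‖⁻¹ * p)
      rw [mul_zero] at h2
      refine h2.congr fun n => ?_
      rw [show ((n:ℤ)+1) = (((n+1):ℕ):ℤ) by push_cast; ring, zpow_natCast, pow_add]
      ring
    filter_upwards [htend.eventually_le_const (by norm_num : (0:ℝ) < 1/2)] with n hn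
    rw [norm_norm, norm_norm]
    have hs := hAn (-((n:ℤ)+1))
    rw [show (-((n:ℤ)+1)+1) = (-(n:ℤ)) by ring] at hs
    have hcinv : (‖z‖ * p^(-((n:ℤ)+1)))⁻¹ = ‖z‖⁻¹ * p^((n:ℤ)+1) := by
      rw [mul_inv, ← zpow_neg, neg_neg]
    have hfac : ‖z‖ * p^(-((n:ℤ)+1)) ≠ 0 := by positivity
    have hkey : ‖A p z (-((n:ℤ)+1))‖ = ‖A p z (-(n:ℤ))‖ * (‖z‖⁻¹ * p^((n:ℤ)+1)) := by
      have h1 : ‖A p z (-((n:ℤ)+1))‖ = ‖A p z (-(n:ℤ))‖ / (‖z‖ * p^(-((n:ℤ)+1))) :=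
        (eq_div_iff hfac).mpr hs.symm
      rw [h1, div_eq_mul_inv, hcinv]
    rw [show (-((n+1:ℕ):ℤ)) = -((n:ℤ)+1) by push_cast; ring, hkey]
    have h0 : 0 ≤ ‖A p z (-(n:ℤ))‖ := norm_nonneg _
    calc ‖A p z (-(n:ℤ))‖ * (‖z‖⁻¹ * p^((n:ℤ)+1)) ≤ ‖A p z (-(n:ℤ))‖ * (1/2) :=
          mul_le_mul_of_nonneg_left hn h0
      _ = 1/2 * ‖A p z (-(n:ℤ))‖ := by ring

lemma tsum_F (n : ℕ) : ∑' m : ℤ, F p z n m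
    = ∑ k ∈ Finset.range (2*n+1), gb p (2*n) k * A p z ((k:ℤ)-(n:ℤ)) := by
  rw [tsum_eq_sum (s := Finset.Icc (-(n:ℤ)) (n:ℤ)) (f := F p z n)
    (by
      intro m hm
      rw [Finset.mem_Icc] at hm
      rw [F, if_neg (by omega), zero_mul])]
  apply Finset.sum_nbij' (i := fun (m : ℤ) => (m + n).toNat) (j := fun (k : ℕ) => (k:ℤ) - n)
  · intro m hm
    rw [Finset.mem_Icc] at hm
    rw [Finset.mem_range]
    omega
  · intro k hk
    rw [Finset.mem_range] at hk
    rw [Finset.mem_Icc]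
    omega
  · intro m hm
    rw [Finset.mem_Icc] at hm
    omega
  · intro k hk
    rw [Finset.mem_range] at hk
    omega
  · intro m hm
    rw [Finset.mem_Icc] at hm
    rw [F, if_pos (by omega)]
    rw [show (((m + (n:ℤ)).toNat : ℤ)) - (n:ℤ) = m by omega]

lemma gb_bound {L : ℝ} (hL : 0 < L) (hLle : ∀ n, L ≤ PhiR p n) (N k : ℕ) :
    ‖gb p N k‖ ≤ (L*L)⁻¹ := by
  rw [gb]
  split_ifs with h
  · rw [phi_cast hp0 hp1 k, phi_cast hp0 hp1 (N-k), phi_cast hp0 hp1 N, ← Complex.ofReal_mul, ← Complex.ofReal_div,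
      Complex.norm_real]
    have hd : 0 < PhiR p k * PhiR p (N-k) := mul_pos (phiR_pos hp0 hp1 k) (phiR_pos hp0 hp1 (N-k))
    rw [Real.norm_eq_abs, abs_of_pos (div_pos (phiR_pos hp0 hp1 N) hd), div_le_iff₀ hd]
    have hLL : L*L ≤ PhiR p k * PhiR p (N-k) := mul_le_mul (hLle k) (hLle (N-k)) hL.le
      (le_trans hL.le (hLle k))
    have h1 : PhiR p N ≤ 1 := phiR_le_one hp0 hp1 N
    have h2 : (0:ℝ) < L*L := mul_pos hL hL
    have h3 : (L*L)⁻¹ * (L*L) = 1 := inv_mul_cancel₀ h2.ne'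
    have h4 := mul_le_mul_of_nonneg_left hLL (inv_nonneg.mpr h2.le)
    linarith
  · rw [norm_zero]
    positivity


lemma tendsto_coeff (m : ℤ) :
    Tendsto (fun n : ℕ => (if m.natAbs ≤ n then gb p (2*n) ((m + n).toNat) else 0))
      atTop (𝓝 ((PhiInf p)⁻¹)) := by
  have t2n : Tendsto (fun n : ℕ => Phi p (2*n)) atTop (𝓝 (PhiInf p)) :=
    (phi_tendsto hp0 hp1).comp (tendsto_atTop_atTop.mpr fun b => ⟨b, fun n hn => by omega⟩)
  have tk : Tendsto (fun n : ℕ => Phi p ((m + n).toNat)) atTop (𝓝 (PhiInf p)) :=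
    (phi_tendsto hp0 hp1).comp (tendsto_atTop_atTop.mpr fun b => ⟨b + m.natAbs, fun n hn => by omega⟩)
  have tj : Tendsto (fun n : ℕ => Phi p (2*n - (m + n).toNat)) atTop (𝓝 (PhiInf p)) :=
    (phi_tendsto hp0 hp1).comp (tendsto_atTop_atTop.mpr fun b => ⟨b + m.natAbs, fun n hn => by omega⟩)
  have hne : PhiInf p * PhiInf p ≠ 0 := mul_ne_zero (phi_mult hp0 hp1).2 (phi_mult hp0 hp1).2
  have tdiv := t2n.div (tk.mul tj) hne
  have hval : PhiInf p / (PhiInf p * PhiInf p) = (PhiInf p)⁻¹ := by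
    field_simp
  rw [hval] at tdiv
  apply tdiv.congr'
  filter_upwards [eventually_ge_atTop m.natAbs] with n hn
  rw [Pi.div_apply, if_pos hn, gb, if_pos (by omega)]

include hz in
lemma theta_tendsto :
    Tendsto (fun n : ℕ => ∏ j ∈ Finset.range n, ((1 - z*(p:ℂ)^j) * (1 - (p:ℂ)^(j+1)/z)))
      atTop (𝓝 (∏' j : ℕ, ((1 - z * (p : ℂ) ^ j) * (1 - (p : ℂ) ^ (j + 1) / z)))) := by
  set f : ℕ → ℂ := fun j => (1 - z*(p:ℂ)^j) * (1 - (p:ℂ)^(j+1)/z) with hf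
  have hmult : Multipliable f := by
    by_cases hzero : ∀ j, f j ≠ 0
    · have hsum : Summable (fun j => f j - 1) := by
        have hb : ∀ j : ℕ, ‖f j - 1‖ ≤ (‖z‖ + ‖z‖⁻¹ + 1) * p^j := by
          intro j
          have hfj : f j - 1 = -(z*(p:ℂ)^j) - (p:ℂ)^(j+1)/z + (p:ℂ)^(2*j+1) := by
            rw [hf]
            have : (p:ℂ)^(2*j+1) = (p:ℂ)^j * (p:ℂ)^(j+1) := by
              rw [← pow_add]; congr 1; omega
            rw [this]
            field_simp
            ring
          rw [hfj]
          have hqn : ∀ i : ℕ, ‖(p:ℂ)^i‖ = p^i := by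
            intro i
            rw [norm_pow, Complex.norm_real, Real.norm_eq_abs, abs_of_pos hp0]
          have h1 : ‖-(z*(p:ℂ)^j)‖ = ‖z‖ * p^j := by
            rw [norm_neg, norm_mul, hqn]
          have h2 : ‖(p:ℂ)^(j+1)/z‖ ≤ ‖z‖⁻¹ * p^j := by
            rw [norm_div, hqn, div_eq_mul_inv, mul_comm]
            apply mul_le_mul_of_nonneg_left _ (inv_nonneg.mpr (norm_nonneg z))
            calc p^(j+1) ≤ p^j * 1 := by
                  rw [pow_succ]
                  exact mul_le_mul_of_nonneg_left hp1.le (pow_pos hp0 j).le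
              _ = p^j := mul_one _
          have h3 : ‖(p:ℂ)^(2*j+1)‖ ≤ 1 * p^j := by
            rw [hqn, one_mul]
            apply pow_le_pow_of_le_one hp0.le hp1.le
            omega
          calc ‖-(z*(p:ℂ)^j) - (p:ℂ)^(j+1)/z + (p:ℂ)^(2*j+1)‖
              ≤ ‖-(z*(p:ℂ)^j) - (p:ℂ)^(j+1)/z‖ + ‖(p:ℂ)^(2*j+1)‖ := norm_add_le _ _
            _ ≤ ‖-(z*(p:ℂ)^j)‖ + ‖(p:ℂ)^(j+1)/z‖ + ‖(p:ℂ)^(2*j+1)‖ := by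
                have := norm_sub_le (-(z*(p:ℂ)^j)) ((p:ℂ)^(j+1)/z)
                linarith
            _ ≤ ‖z‖ * p^j + ‖z‖⁻¹ * p^j + 1 * p^j := by
                rw [h1]
                linarith
            _ = (‖z‖ + ‖z‖⁻¹ + 1) * p^j := by ring
        apply Summable.of_norm_bounded ((summable_geometric_of_lt_one hp0.le hp1).mul_left
          (‖z‖ + ‖z‖⁻¹ + 1)) hb
      have := (mult_aux hsum (fun n => by
        rw [add_sub_cancel]
        exact hzero n)).1
      exact this.congr (fun n => by rw [add_sub_cancel])
    · push_neg at hzero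
      obtain ⟨j0, hj0⟩ := hzero
      refine ⟨0, ?_⟩
      have hev : ∀ᶠ s : Finset ℕ in atTop, ∏ j ∈ s, f j = 0 := by
        filter_upwards [eventually_ge_atTop {j0}] with s hs
        exact Finset.prod_eq_zero (hs (Finset.mem_singleton_self j0)) hj0
      exact Tendsto.congr' (hev.mono fun s hs => hs.symm) tendsto_const_nhds
  exact hmult.hasProd.tendsto_prod_nat





end

/-- The normalized Jacobi theta function
`θ(z;p) = ∏_{j=0}^∞ (1 - z p^j)(1 - p^{j+1}/z)`. -/
noncomputable def theta (p : ℝ) (z : ℂ) : ℂ :=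
  ∏' j : ℕ, ((1 - z * (p : ℂ) ^ j) * (1 - (p : ℂ) ^ (j + 1) / z))

/-- The Jacobi triple product identity
`∑_{k∈ℤ} (-z)^k p^{k(k-1)/2} = θ(z;p) ∏_{j=1}^∞ (1 - p^j)`. -/
theorem jacobi_triple_product (p : ℝ) (hp0 : 0 < p) (hp1 : p < 1) (z : ℂ) (hz : z ≠ 0) :
    ∑' k : ℤ, (-z) ^ k * (p : ℂ) ^ (k * (k - 1) / 2) =
      theta p z * ∏' j : ℕ, (1 - (p : ℂ) ^ (j + 1)) := by
  obtain ⟨L, hL, hLle, hLcast⟩ := phiR_limit hp0 hp1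
  have hdom : Tendsto (fun n => ∑' m : ℤ, F p z n m) atTop
      (𝓝 (∑' m : ℤ, (PhiInf p)⁻¹ * A p z m)) := by
    apply tendsto_tsum_of_dominated_convergence
      (bound := fun m : ℤ => (L*L)⁻¹ * ‖A p z m‖)
      ((summable_normA hp0 hp1 hz).mul_left _)
    · intro m
      exact ((tendsto_coeff hp0 hp1 m).mul_const (A p z m)).congr fun n => rfl
    · apply Eventually.of_forall
      intro n m
      rw [F, norm_mul]
      apply mul_le_mul_of_nonneg_right _ (norm_nonneg _)
      split_ifs with h
      · exact gb_bound hp0 hp1 hL hLle _ _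
      · rw [norm_zero]; positivity
  have hfin : (fun n : ℕ => ∑' m : ℤ, F p z n m)
      = fun n : ℕ => ∏ j ∈ Finset.range n, ((1 - z*(p:ℂ)^j) * (1 - (p:ℂ)^(j+1)/z)) := by
    funext n
    rw [tsum_F (z := z) hp0 hp1 n, finite_jtp hp0 hp1 hz n]
    apply Finset.sum_congr rfl
    intro k _
    rw [A]
  rw [hfin] at hdom
  have huniq : theta p z = ∑' m : ℤ, (PhiInf p)⁻¹ * A p z m :=
    tendsto_nhds_unique (theta_tendsto hp0 hp1 hz) hdom
  rw [tsum_mul_left] at huniq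
  have hPhiInfEq : (∏' j : ℕ, (1 - (p : ℂ) ^ (j + 1))) = PhiInf p := rfl
  have hA : (∑' k : ℤ, (-z) ^ k * (p : ℂ) ^ (k * (k - 1) / 2)) = ∑' m : ℤ, A p z m := rfl
  rw [hA, hPhiInfEq, huniq]
  field_simp [(phi_mult hp0 hp1).2]
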